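/- For any Kripke model M and binary relation modality ◇ interpreted by R, the enrichment of M with the transitive closure (R)⁺ interpreted as a new modality ⟨e⁺⟩ validates the axioms A3 (⟨e⟩p → ⟨e⁺⟩p), A4 (⟨e⟩⟨e⁺⟩p → ⟨e⁺⟩p), and A5 (⟨e⁺⟩p → ⟨e⟩p ∨ ⟨e⁺⟩(¬p ∧ ⟨e⟩p)) at every point under every valuation. -/

import Mathlib

inductive Fm (A : Type) : Type
  | bot : Fm A
  | var : ℕ → Fm A
  | imp : Fm A → Fm A → Fm A
  | dia : A → Fm A → Fm A

namespace Fm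
variable {A B : Type}
def neg (φ : Fm A) : Fm A := imp φ bot
def disj (φ ψ : Fm A) : Fm A := imp (neg φ) ψ
def conj (φ ψ : Fm A) : Fm A := neg (imp φ (neg ψ))
def equiv (φ ψ : Fm A) : Fm A := conj (imp φ ψ) (imp ψ φ)
def box (a : A) (φ : Fm A) : Fm A := neg (dia a (neg φ))
def map (f : A → B) : Fm A → Fm B
  | bot => bot
  | var n => var n
  | imp φ ψ => imp (map f φ) (map f ψ)
  | dia a φ => dia (f a) (map f φ)
end Fm

structure Model (A : Type) where
  W : Type
  R : A → W → W → Prop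
  V : ℕ → W → Prop

def Sat {A : Type} (M : Model A) : M.W → Fm A → Prop
  | _, .bot => False
  | x, .var n => M.V n x
  | x, .imp φ ψ => Sat M x φ → Sat M x ψ
  | x, .dia a φ => ∃ y, M.R a x y ∧ Sat M y φ

def Model.valid {A : Type} (M : Model A) (φ : Fm A) : Prop := ∀ x, Sat M x φ

def Model.validSet {A : Type} (M : Model A) (L : Set (Fm A)) : Prop := ∀ φ ∈ L, M.valid φ

def SubClosed {A : Type} (Γ : Set (Fm A)) : Prop :=
  (∀ φ ψ : Fm A, Fm.imp φ ψ ∈ Γ → φ ∈ Γ ∧ ψ ∈ Γ) ∧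
  (∀ (a : A) (φ : Fm A), Fm.dia a φ ∈ Γ → φ ∈ Γ)

/-- `x ∼_Γ y`: x and y satisfy the same formulas of Γ in M. -/
def ModEqv {A : Type} (M : Model A) (Γ : Set (Fm A)) (x y : M.W) : Prop :=
  ∀ φ ∈ Γ, (Sat M x φ ↔ Sat M y φ)

def eqvSetoid {A : Type} (M : Model A) (Γ : Set (Fm A)) : Setoid M.W :=
  ⟨ModEqv M Γ, ⟨fun _ _ _ => Iff.rfl, fun h φ hφ => (h φ hφ).symm,
    fun h1 h2 φ hφ => (h1 φ hφ).trans (h2 φ hφ)⟩⟩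

def filtModel {A : Type} (M : Model A) (s : Setoid M.W)
    (R' : A → Quotient s → Quotient s → Prop) (V' : ℕ → Quotient s → Prop) : Model A :=
  ⟨Quotient s, R', V'⟩

/-- `(filtModel M s R' V')` is a Γ-filtration of M through the equivalence s. -/
structure ModelIsFiltration {A : Type} (M : Model A) (Γ : Set (Fm A)) (s : Setoid M.W)
    (R' : A → Quotient s → Quotient s → Prop) (V' : ℕ → Quotient s → Prop) : Prop where
  refines : ∀ x y : M.W, s.r x y → ModEqv M Γ x y
  val : ∀ n : ℕ, Fm.var n ∈ Γ → ∀ x : M.W, (V' n (Quotient.mk s x) ↔ M.V n x)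
  min_sub : ∀ (a : A) (x y : M.W), M.R a x y → R' a (Quotient.mk s x) (Quotient.mk s y)
  sub_max : ∀ (a : A) (x y : M.W), R' a (Quotient.mk s x) (Quotient.mk s y) →
      ∀ φ : Fm A, Fm.dia a φ ∈ Γ → Sat M y φ → Sat M x (Fm.dia a φ)

/-- L admits definable filtration. -/
def AdmitsDefFilt {A : Type} (L : Set (Fm A)) : Prop :=
  ∀ M : Model A, M.validSet L → ∀ Γ : Set (Fm A), Γ.Finite → SubClosed Γ →
    ∃ Δ : Set (Fm A), Δ.Finite ∧ Γ ⊆ Δ ∧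
      ∃ (R' : A → Quotient (eqvSetoid M Δ) → Quotient (eqvSetoid M Δ) → Prop)
        (V' : ℕ → Quotient (eqvSetoid M Δ) → Prop),
        Finite (Quotient (eqvSetoid M Δ)) ∧
        ModelIsFiltration M Γ (eqvSetoid M Δ) R' V' ∧
        (filtModel M (eqvSetoid M Δ) R' V').validSet L

/-- Enriching a model with the transitive closure of R validates A3, A4, A5.
Modalities: `true` is ⟨e⟩ (relation R), `false` is ⟨e⁺⟩ (relation R⁺). -/
theorem transitive_closure_enrichment_validates (W : Type) (R : W → W → Prop)
    (V : ℕ → W → Prop) (x : W) :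
    Sat (Model.mk W (fun b : Bool => if b then R else Relation.TransGen R) V) x
      (Fm.imp (Fm.dia true (Fm.var 0)) (Fm.dia false (Fm.var 0))) ∧
    Sat (Model.mk W (fun b : Bool => if b then R else Relation.TransGen R) V) x
      (Fm.imp (Fm.dia true (Fm.dia false (Fm.var 0))) (Fm.dia false (Fm.var 0))) ∧
    Sat (Model.mk W (fun b : Bool => if b then R else Relation.TransGen R) V) x
      (Fm.imp (Fm.dia false (Fm.var 0))
        (Fm.disj (Fm.dia true (Fm.var 0))
          (Fm.dia false (Fm.conj (Fm.neg (Fm.var 0)) (Fm.dia true (Fm.var 0)))))) := by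
  refine ⟨?_, ?_, ?_⟩
  · rintro ⟨y, hxy, hy⟩
    exact ⟨y, Relation.TransGen.single (by simpa using hxy), hy⟩
  · rintro ⟨y, hxy, z, hyz, hz⟩
    exact ⟨z, Relation.TransGen.head (by simpa using hxy) (by simpa using hyz), hz⟩
  · rintro ⟨y, hxy, hy⟩
    simp only [if_true, if_false, Bool.false_eq_true] at *
    have key : ∀ y : W, Relation.TransGen R x y → V 0 y →
        (∃ y, R x y ∧ V 0 y) ∨
        (∃ z, Relation.TransGen R x z ∧ ¬ V 0 z ∧ ∃ w, R z w ∧ V 0 w) := by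
      intro y hxy
      induction hxy with
      | single h => exact fun hv => Or.inl ⟨_, h, hv⟩
      | @tail b c hxb hby ih =>
        intro hv
        by_cases hb : V 0 b
        · exact ih hb
        · exact Or.inr ⟨_, hxb, hb, _, hby, hv⟩
    rcases key y hxy hy with ⟨y, h1, h2⟩ | ⟨z, h1, h2, w, h3, h4⟩
    · intro hcon; exact absurd ⟨y, by simpa using h1, h2⟩ hcon
    · intro _
      refine ⟨z, by simpa using h1, ?_⟩
      intro h
      exact h h2 ⟨w, by simpa using h3, h4⟩
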